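/- arXiv:1207.2398 — 4 statements merged into one kernel-verified Lean document; each statement's English description precedes it below -/
import Mathlib

section
/- If a, b, n are positive integers such that a²n/(2n+4) and b²n/(2n+4) are both integers, then (a+b)²n/(2n+4) is also an integer. -/
/-- If `a`, `b`, `n` are positive integers such that `a²n/(2n+4)` and `b²n/(2n+4)` are both
integers, then `(a+b)²n/(2n+4)` is also an integer. -/
theorem stmt0 (a b n : ℕ) (ha : 0 < a) (hb : 0 < b) (hn : 0 < n)
    (h1 : (2 * n + 4) ∣ a ^ 2 * n) (h2 : (2 * n + 4) ∣ b ^ 2 * n) :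
    (2 * n + 4) ∣ (a + b) ^ 2 * n := by
  have key : (2 * n + 4) ∣ a * b * n := by
    have h := mul_dvd_mul h1 h2
    have h' : (2 * n + 4) ^ 2 ∣ (a * b * n) ^ 2 := by
      calc (2 * n + 4) ^ 2 = (2 * n + 4) * (2 * n + 4) := by ring
        _ ∣ a ^ 2 * n * (b ^ 2 * n) := h
        _ = (a * b * n) ^ 2 := by ring
    exact (Nat.pow_dvd_pow_iff two_ne_zero).mp h'
  have e : (a + b) ^ 2 * n = a ^ 2 * n + 2 * (a * b * n) + b ^ 2 * n := by ring
  rw [e]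
  exact dvd_add (dvd_add h1 (key.mul_left 2)) h2
end

section
/- Let n be a positive even integer, write n = 2a, and let m be an odd integer such that -2m² + (n+2) is divisible by 8(n+2). Then n is divisible by 16. -/
/-- Let `n` be a positive even integer, `n = 2a`, and let `m` be an odd integer such that
`-2m² + (n+2)` is divisible by `8(n+2)`. Then `n` is divisible by `16`. -/
theorem stmt1 (n a m : ℤ) (hn : 0 < n) (hna : n = 2 * a) (hm : Odd m)
    (h : (8 * (n + 2)) ∣ (-2 * m ^ 2 + (n + 2))) : (16 : ℤ) ∣ n := by
  obtain ⟨k, hk⟩ := h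
  obtain ⟨t, ht⟩ := hm
  obtain ⟨u, hu⟩ := Int.even_mul_succ_self t
  refine ⟨u + k * (a + 1), ?_⟩
  subst hna ht
  linear_combination hk + 8 * hu
end

section
/- Fix n ≥ 0. For chiral labels (l₁,−l₁), (l₂,−l₂) with l₁,l₂ ∈ {0,…,n}, exactly one term in the fusion product (l₁,m₁)(l₂,m₂) = ⊕_{|l₁−l₂| ≤ l ≤ min(l₁+l₂,2n−l₁−l₂), l+l₁+l₂ ∈ 2ℤ} (l, m₁+m₂) is again a chiral label (of the form (l,−l)), and it occurs precisely when l = l₁+l₂ ≤ n; if l₁+l₂ > n no chiral label occurs in the product. -/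
/-- Fix `n ≥ 0`. For chiral labels `(l₁,−l₁)`, `(l₂,−l₂)` with `l₁,l₂ ∈ {0,…,n}`, a summand
`(l, −l₁−l₂ mod (2n+4))` of the fusion product is a chiral label (i.e. `l ≤ n` and
`l ≡ l₁+l₂ mod (2n+4)`) precisely when `l₁+l₂ ≤ n` and `l = l₁+l₂`; in particular if
`l₁+l₂ > n` no chiral label occurs in the product. -/
theorem stmt12 (n l₁ l₂ : ℕ) (h₁ : l₁ ≤ n) (h₂ : l₂ ≤ n) (l : ℕ) :
    ((max l₁ l₂ - min l₁ l₂ ≤ l) ∧ l ≤ min (l₁ + l₂) (2 * n - l₁ - l₂) ∧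
      Even (l + l₁ + l₂) ∧ l ≤ n ∧ l ≡ l₁ + l₂ [MOD 2 * n + 4])
    ↔ (l₁ + l₂ ≤ n ∧ l = l₁ + l₂) := by
  constructor
  · rintro ⟨-, hmin, -, hn, hmod⟩
    have hl : l < 2 * n + 4 := by omega
    have hs : l₁ + l₂ < 2 * n + 4 := by omega
    have := hmod
    rw [Nat.ModEq, Nat.mod_eq_of_lt hl, Nat.mod_eq_of_lt hs] at this
    omega
  · rintro ⟨hle, rfl⟩
    refine ⟨by omega, by omega, ?_, by omega, Nat.ModEq.refl _⟩
    rw [Nat.even_iff]; omega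
end

section
/- Let n ≡ 0 mod 16 and let k be an odd positive integer with nk²/(8(n+2)) ∈ ℤ. Then −(k+n+2)²/(4(n+2)) + k²/8 ∈ ℤ, i.e. the sector σ^kτ = (l,m,s) with appropriate labels has statistics phase exp(2πi(−(k+n+2)²/(4(n+2)) + k²/8)) = 1. Moreover, for any positive integer a, −(2ak+n+2)²/(4(n+2)) + (2ak)²/8 ∈ 1/2 + ℤ, i.e. σ^{2ak}τ has statistics phase −1. -/
/-- Let `n ≡ 0 mod 16` and let `k` be an odd positive integer with `nk²/(8(n+2)) ∈ ℤ`. Then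
`−(k+n+2)²/(4(n+2)) + k²/8 ∈ ℤ` (the sector `σᵏτ` has statistics phase `1`), and for every
positive integer `a`, `−(2ak+n+2)²/(4(n+2)) + (2ak)²/8 ∈ 1/2 + ℤ` (the sector `σ^{2ak}τ`
has statistics phase `−1`). -/
theorem stmt15 (n k : ℕ) (hn : 0 < n) (h16 : 16 ∣ n) (hk : 0 < k) (hkodd : Odd k)
    (hdvd : (8 * (n + 2)) ∣ n * k ^ 2) :
    (∃ z : ℤ, -(((k : ℚ) + n + 2) ^ 2) / (4 * ((n : ℚ) + 2)) + (k : ℚ) ^ 2 / 8 = z) ∧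
    (∀ a : ℕ, 0 < a → ∃ z : ℤ,
      -(((2 * a * k : ℕ) : ℚ) + n + 2) ^ 2 / (4 * ((n : ℚ) + 2)) +
        ((2 * a * k : ℕ) : ℚ) ^ 2 / 8 = 1 / 2 + z) := by
  obtain ⟨m, hm⟩ := h16
  obtain ⟨j, hj⟩ := hkodd
  obtain ⟨c, hc⟩ := hdvd
  have hnq : (n : ℚ) = 16 * m := by exact_mod_cast hm
  have hkq : (k : ℚ) = 2 * j + 1 := by exact_mod_cast hj
  have hcq : (n : ℚ) * k ^ 2 = 8 * ((n : ℚ) + 2) * c := by exact_mod_cast hc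
  have h2 : (n : ℚ) + 2 ≠ 0 := by positivity
  constructor
  · refine ⟨(c : ℤ) - j - 1 - 4 * m, ?_⟩
    push_cast
    rw [hnq, hkq] at hcq ⊢
    field_simp
    linear_combination 4 * hcq
  · intro a ha
    refine ⟨4 * a ^ 2 * c - a * k - 4 * m - 1, ?_⟩
    push_cast
    rw [hnq] at hcq ⊢
    field_simp
    linear_combination 32 * (a : ℚ) ^ 2 * hcq
end
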